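/- Let A = {1, a, b} be a 2-integral probability group with three distinct elements such that a⁻¹ = a and b⁻¹ = b, and write s(a) = n₁² and s(b) = n₂² with n₁, n₂ positive integers. Then gcd(n₁, n₂) = 1. -/

import Mathlib

/-- A probability group (Harrison): a set `A` with a distinguished element `one`,
an inverse map `inv`, and a probability map `p` satisfying axioms (1)-(6). -/
structure ProbabilityGroup (A : Type*) where
  /-- the probability map: `p a b c` is `p(a·b = c)` -/
  p : A → A → A → ℝ
  /-- the unit element -/
  one : A
  /-- the inverse map -/
  inv : A → A
  p_nonneg : ∀ a b c, 0 ≤ p a b c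
  finite_support : ∀ a b, {c | p a b c ≠ 0}.Finite
  sum_eq_one : ∀ a b, ∑ᶠ c, p a b c = 1
  assoc : ∀ a b c d, ∑ᶠ x, p a b x * p x c d = ∑ᶠ y, p a y d * p b c y
  one_mul : ∀ a, p one a a = 1
  mul_one : ∀ a, p a one a = 1
  inv_pos : ∀ a, 0 < p a (inv a) one
  inv_unique : ∀ a b, 0 < p a b one → b = inv a
  p_inv : ∀ a b c, p a b c = p (inv b) (inv a) (inv c)
  inv_symm : ∀ a, p a (inv a) one = p (inv a) a one

/-- The size `s(a) = 1 / p(a·a⁻¹ = 1)` of an element of a probability group. -/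
noncomputable def ProbabilityGroup.s {A : Type*} (P : ProbabilityGroup A) (a : A) : ℝ :=
  1 / P.p a (P.inv a) P.one

/-- A probability group is 2-integral if each `s(a)^(1/2)` is a positive integer and
`p(a·b=c) s(a)^(1/2) s(b)^(1/2) / s(c)^(1/2)` is always a non-negative integer. -/
def ProbabilityGroup.TwoIntegral {A : Type*} (P : ProbabilityGroup A) : Prop :=
  (∀ a, ∃ n : ℕ, 0 < n ∧ Real.sqrt (P.s a) = n) ∧
  (∀ a b c, ∃ n : ℕ,
    P.p a b c * Real.sqrt (P.s a) * Real.sqrt (P.s b) / Real.sqrt (P.s c) = n)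

/-- In a 2-integral probability group `{1, a, b}` with `a⁻¹ = a`, `b⁻¹ = b`,
`s(a) = n₁²` and `s(b) = n₂²`, one has `gcd(n₁, n₂) = 1`. -/
theorem twoIntegral_card_three_coprime {A : Type*} (P : ProbabilityGroup A) (a b : A)
    (ha : a ≠ P.one) (hb : b ≠ P.one) (hab : a ≠ b)
    (henum : ∀ x : A, x = P.one ∨ x = a ∨ x = b)
    (hia : P.inv a = a) (hib : P.inv b = b)
    (h2 : P.TwoIntegral)
    (n₁ n₂ : ℕ) (hn₁ : 0 < n₁) (hn₂ : 0 < n₂)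
    (hsa : P.s a = (n₁ : ℝ) ^ 2) (hsb : P.s b = (n₂ : ℝ) ^ 2) :
    Nat.gcd n₁ n₂ = 1 := by
  classical
  obtain ⟨hint1, hint2⟩ := h2
  have hn1R : (0:ℝ) < n₁ := by exact_mod_cast hn₁
  have hn2R : (0:ℝ) < n₂ := by exact_mod_cast hn₂
  have hsq : Real.sqrt (P.s a) = n₁ := by
    rw [hsa]; exact Real.sqrt_sq hn1R.le
  have hsqb : Real.sqrt (P.s b) = n₂ := by
    rw [hsb]; exact Real.sqrt_sq hn2R.le
  obtain ⟨t, ht⟩ := hint2 a a a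
  obtain ⟨j, hj⟩ := hint2 a a b
  rw [hsq] at ht hj
  rw [hsqb] at hj
  -- p(a·a=1) = 1/n₁²
  have hpone : P.p a a P.one = 1 / (n₁:ℝ)^2 := by
    have hpos := P.inv_pos a
    rw [hia] at hpos
    have hs : (1:ℝ) / P.p a a P.one = (n₁:ℝ)^2 := by
      rw [← hsa, ProbabilityGroup.s, hia]
    field_simp at hs
    field_simp [hs]
    linarith
  -- the finite sum over {1, a, b}
  have hsum : P.p a a P.one + P.p a a a + P.p a a b = 1 := by
    have h1 := P.sum_eq_one a a
    have hsub : Function.support (P.p a a) ⊆ ↑({P.one, a, b} : Finset A) := by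
      intro x _
      simp only [Finset.coe_insert, Finset.coe_singleton, Set.mem_insert_iff,
        Set.mem_singleton_iff]
      exact henum x
    rw [finsum_eq_finset_sum_of_support_subset _ hsub] at h1
    rw [Finset.sum_insert (by simp [Ne.symm ha, Ne.symm hb]),
        Finset.sum_insert (by simp [hab]), Finset.sum_singleton] at h1
    linarith
  -- express p(a·a=a) and p(a·a=b)
  have hpa : P.p a a a = (t:ℝ) / n₁ := by
    have hne : (n₁:ℝ) ≠ 0 := hn1R.ne'
    field_simp at ht ⊢
    nlinarith [ht]
  have hpb : P.p a a b = (j:ℝ) * n₂ / (n₁:ℝ)^2 := by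
    have hne : (n₁:ℝ) ≠ 0 := hn1R.ne'
    have hne2 : (n₂:ℝ) ≠ 0 := hn2R.ne'
    field_simp at hj ⊢
    nlinarith [hj]
  -- key integer identity: 1 + t*n₁ + j*n₂ = n₁²
  have keyR : (1:ℝ) + t * n₁ + j * n₂ = (n₁:ℝ)^2 := by
    rw [hpone, hpa, hpb] at hsum
    have h3 : (n₁:ℝ)^3 * (1 + t*n₁ + j*n₂) = (n₁:ℝ)^3 * ((n₁:ℝ)^2) := by
      field_simp at hsum
      linear_combination (n₁:ℝ)^3 * hsum
    exact mul_left_cancel₀ (pow_ne_zero 3 hn1R.ne') h3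
  have key : 1 + t * n₁ + j * n₂ = n₁ ^ 2 := by exact_mod_cast keyR
  have hd : Nat.gcd n₁ n₂ ∣ 1 := by
    have h1 : Nat.gcd n₁ n₂ ∣ n₁ ^ 2 := dvd_pow (Nat.gcd_dvd_left _ _) two_ne_zero
    have h2 : Nat.gcd n₁ n₂ ∣ t * n₁ + j * n₂ :=
      dvd_add (Dvd.dvd.mul_left (Nat.gcd_dvd_left _ _) t)
        (Dvd.dvd.mul_left (Nat.gcd_dvd_right _ _) j)
    have h3 : n₁ ^ 2 - (t * n₁ + j * n₂) = 1 := by omega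
    have := Nat.dvd_sub h1 h2
    rwa [h3] at this
  exact Nat.dvd_one.mp hd
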